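/- Let n ∈ ℕ and let B, C, X, Z be n×n complex matrices such that X² + B·X + C = 0, Z² + B·Z + C = 0, and X − Z is invertible. Define U(t) = (exp(t·X) − exp(t·Z))·(X − Z)⁻¹ for t ∈ ℝ. Then U is twice differentiable, U''(t) + B·U'(t) + C·U(t) = 0 for all t ∈ ℝ, U(0) = 0, and U'(0) = 1; moreover U'(t) = (X·exp(t·X) − Z·exp(t·Z))·(X − Z)⁻¹ for all t ∈ ℝ. -/

import Mathlib

open NormedSpace in
private lemma exp_entry_hasDerivAt (n : ℕ) (M : Matrix (Fin n) (Fin n) ℂ) (t : ℝ)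
    (i j : Fin n) :
    HasDerivAt (fun s : ℝ => exp ((s : ℂ) • M) i j) ((M * exp ((t : ℂ) • M)) i j) t := by
  letI : NormedRing (Matrix (Fin n) (Fin n) ℂ) := Matrix.linftyOpNormedRing
  letI : NormedAlgebra ℂ (Matrix (Fin n) (Fin n) ℂ) := Matrix.linftyOpNormedAlgebra
  letI : NormedAlgebra ℝ (Matrix (Fin n) (Fin n) ℂ) := Matrix.linftyOpNormedAlgebra
  have hd0 := HasDerivAt.scomp (𝕜 := ℝ) t
    (hasDerivAt_exp_smul_const' (𝕂 := ℂ) M (t : ℂ)) Complex.ofRealCLM.hasDerivAt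
  have hd : HasDerivAt (fun s : ℝ => exp ((s : ℂ) • M)) (M * exp ((t : ℂ) • M)) t := by
    simp only [Complex.ofRealCLM_apply, Complex.ofReal_one, one_smul] at hd0
    exact hd0
  let L : Matrix (Fin n) (Fin n) ℂ →ₗ[ℝ] ℂ :=
    { toFun := fun A => A i j
      map_add' := fun _ _ => rfl
      map_smul' := fun _ _ => rfl }
  have hc : Continuous L := L.continuous_of_finiteDimensional
  exact (ContinuousLinearMap.hasFDerivAt ⟨L, hc⟩).comp_hasDerivAt t hd

attribute [local instance] Matrix.normedAddCommGroup Matrix.normedSpace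

open NormedSpace in
private lemma exp_hasDerivAt (n : ℕ) (M : Matrix (Fin n) (Fin n) ℂ) (t : ℝ) :
    HasDerivAt (fun s : ℝ => exp ((s : ℂ) • M)) (M * exp ((t : ℂ) • M)) t :=
  hasDerivAt_pi.2 fun i => hasDerivAt_pi.2 fun j => exp_entry_hasDerivAt n M t i j

private lemma matrixHasDerivAt_mul_const (n : ℕ) {f : ℝ → Matrix (Fin n) (Fin n) ℂ}
    {f' : Matrix (Fin n) (Fin n) ℂ} {t : ℝ} (hf : HasDerivAt f f' t)
    (W : Matrix (Fin n) (Fin n) ℂ) :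
    HasDerivAt (fun s => f s * W) (f' * W) t := by
  let L : Matrix (Fin n) (Fin n) ℂ →ₗ[ℝ] Matrix (Fin n) (Fin n) ℂ := LinearMap.mulRight ℝ W
  have hc : Continuous L := L.continuous_of_finiteDimensional
  exact (ContinuousLinearMap.hasFDerivAt ⟨L, hc⟩).comp_hasDerivAt t hf

private lemma matrixHasDerivAt_const_mul (n : ℕ) {f : ℝ → Matrix (Fin n) (Fin n) ℂ}
    {f' : Matrix (Fin n) (Fin n) ℂ} {t : ℝ} (hf : HasDerivAt f f' t)
    (W : Matrix (Fin n) (Fin n) ℂ) :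
    HasDerivAt (fun s => W * f s) (W * f') t := by
  let L : Matrix (Fin n) (Fin n) ℂ →ₗ[ℝ] Matrix (Fin n) (Fin n) ℂ := LinearMap.mulLeft ℝ W
  have hc : Continuous L := L.continuous_of_finiteDimensional
  exact (ContinuousLinearMap.hasFDerivAt ⟨L, hc⟩).comp_hasDerivAt t hf

/-- If `X`, `Z` form a complete pair of right solvents, then
`U(t) = (exp(tX) − exp(tZ))·(X − Z)⁻¹` is twice differentiable,
`U'' + B·U' + C·U = 0`, `U(0) = 0`, `U'(0) = 1`, and
`U'(t) = (X·exp(tX) − Z·exp(tZ))·(X − Z)⁻¹`. -/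
theorem matrixODE_fundamental_solution (n : ℕ) (B C X Z : Matrix (Fin n) (Fin n) ℂ)
    (hX : X ^ 2 + B * X + C = 0) (hZ : Z ^ 2 + B * Z + C = 0) (hXZ : IsUnit (X - Z))
    (U : ℝ → Matrix (Fin n) (Fin n) ℂ)
    (hU : ∀ t : ℝ, U t =
      (NormedSpace.exp ((t : ℂ) • X) - NormedSpace.exp ((t : ℂ) • Z)) * (X - Z)⁻¹) :
    ∃ U' U'' : ℝ → Matrix (Fin n) (Fin n) ℂ,
      (∀ t : ℝ, HasDerivAt U (U' t) t) ∧
      (∀ t : ℝ, HasDerivAt U' (U'' t) t) ∧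
      (∀ t : ℝ, U'' t + B * U' t + C * U t = 0) ∧
      U 0 = 0 ∧ U' 0 = 1 ∧
      (∀ t : ℝ, U' t =
        (X * NormedSpace.exp ((t : ℂ) • X) - Z * NormedSpace.exp ((t : ℂ) • Z)) *
          (X - Z)⁻¹) := by
  set W := (X - Z)⁻¹ with hW
  refine ⟨fun t => (X * NormedSpace.exp ((t : ℂ) • X)
        - Z * NormedSpace.exp ((t : ℂ) • Z)) * W,
    fun t => (X * (X * NormedSpace.exp ((t : ℂ) • X))
        - Z * (Z * NormedSpace.exp ((t : ℂ) • Z))) * W, ?_, ?_, ?_, ?_, ?_, fun t => rfl⟩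
  · intro t
    rw [show U = fun s : ℝ => (NormedSpace.exp ((s : ℂ) • X)
        - NormedSpace.exp ((s : ℂ) • Z)) * W from funext hU]
    exact matrixHasDerivAt_mul_const n ((exp_hasDerivAt n X t).sub (exp_hasDerivAt n Z t)) W
  · intro t
    exact matrixHasDerivAt_mul_const n
      ((matrixHasDerivAt_const_mul n (exp_hasDerivAt n X t) X).sub
        (matrixHasDerivAt_const_mul n (exp_hasDerivAt n Z t) Z)) W
  · intro t
    set E := NormedSpace.exp ((t : ℂ) • X)
    set F := NormedSpace.exp ((t : ℂ) • Z)
    have h1 : (X * (X * E) - Z * (Z * F)) * W + B * ((X * E - Z * F) * W)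
        + C * ((E - F) * W)
        = ((X ^ 2 + B * X + C) * E - (Z ^ 2 + B * Z + C) * F) * W := by
      noncomm_ring
    rw [hU t, h1, hX, hZ]
    simp
  · rw [hU 0]; simp
  · have hdet : IsUnit (X - Z).det := (Matrix.isUnit_iff_isUnit_det _).mp hXZ
    simp only [Complex.ofReal_zero, zero_smul, NormedSpace.exp_zero, mul_one]
    rw [hW]
    exact Matrix.mul_nonsing_inv _ hdet
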